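/- For all n ≥ 1 and k ≥ 0, the quantities a_{n,k}^{asc}(132,213), a_{n,k}^{des}(132,213), a_{n,k}^{asc}(213,231), and a_{n,k}^{des}(213,231) are all equal to C(n−1, k). -/

import Mathlib

open scoped Classical

/-- The word `π₁π₂⋯π_n` of a permutation of `{1,…,n}`, with values in `{1,…,n}`. -/
def permWord {n : ℕ} (π : Equiv.Perm (Fin n)) : List ℕ :=
  List.ofFn fun i => (π i : ℕ) + 1

/-- The word `l` contains the word `ρ` as a (classical) pattern. -/
def ContainsPat (l ρ : List ℕ) : Prop :=
  ∃ f : Fin ρ.length → Fin l.length, StrictMono f ∧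
    ∀ a b : Fin ρ.length, ρ.get a < ρ.get b ↔ l.get (f a) < l.get (f b)

/-- `l` avoids every pattern in the list `B`. -/
def AvoidsAll (l : List ℕ) (B : List (List ℕ)) : Prop :=
  ∀ ρ ∈ B, ¬ ContainsPat l ρ

/-- Number of ascents of the word `l`. -/
def ascents (l : List ℕ) : ℕ :=
  ((Finset.range (l.length - 1)).filter fun i => l.getD i 0 < l.getD (i + 1) 0).card

/-- Number of descents of the word `l`. -/
def descents (l : List ℕ) : ℕ :=
  ((Finset.range (l.length - 1)).filter fun i => l.getD (i + 1) 0 < l.getD i 0).card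

/-- Number of double ascents of the word `l`. -/
def dascents (l : List ℕ) : ℕ :=
  ((Finset.range (l.length - 2)).filter fun i =>
    l.getD i 0 < l.getD (i + 1) 0 ∧ l.getD (i + 1) 0 < l.getD (i + 2) 0).card

/-- Number of double descents of the word `l`. -/
def ddescents (l : List ℕ) : ℕ :=
  ((Finset.range (l.length - 2)).filter fun i =>
    l.getD (i + 1) 0 < l.getD i 0 ∧ l.getD (i + 2) 0 < l.getD (i + 1) 0).card

/-- Number of peaks of the word `l`. -/
def peaks (l : List ℕ) : ℕ :=
  ((Finset.range (l.length - 2)).filter fun i =>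
    l.getD i 0 < l.getD (i + 1) 0 ∧ l.getD (i + 2) 0 < l.getD (i + 1) 0).card

/-- Number of valleys of the word `l`. -/
def valleys (l : List ℕ) : ℕ :=
  ((Finset.range (l.length - 2)).filter fun i =>
    l.getD (i + 1) 0 < l.getD i 0 ∧ l.getD (i + 1) 0 < l.getD (i + 2) 0).card

/-- `acount n k stat B` is the number of permutations of `{1,…,n}` avoiding all
patterns in `B` whose statistic `stat` equals `k`. -/
noncomputable def acount (n k : ℕ) (stat : List ℕ → ℕ) (B : List (List ℕ)) : ℕ :=
  (Finset.univ.filter fun π : Equiv.Perm (Fin n) =>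
    AvoidsAll (permWord π) B ∧ stat (permWord π) = k).card


namespace Stmt9Aux


variable {n : ℕ}

lemma permWord_length (π : Equiv.Perm (Fin n)) : (permWord π).length = n := by
  simp [permWord]

lemma permWord_get (π : Equiv.Perm (Fin n)) (i : Fin (permWord π).length) :
    (permWord π).get i = (π (Fin.cast (permWord_length π) i) : ℕ) + 1 := by
  simp only [permWord, List.get_ofFn]
  exact List.get_ofFn _ _


lemma permWord_getD (π : Equiv.Perm (Fin n)) (i : ℕ) (h : i < n) :
    (permWord π).getD i 0 = (π ⟨i, h⟩ : ℕ) + 1 := by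
  rw [List.getD_eq_getElem?_getD]
  simp [permWord, List.getElem?_ofFn, h]

def Pat132 (π : Equiv.Perm (Fin n)) : Prop :=
  ∃ i j k : Fin n, i < j ∧ j < k ∧ π i < π k ∧ π k < π j

lemma contains132_iff (π : Equiv.Perm (Fin n)) :
    ContainsPat (permWord π) [1,3,2] ↔ Pat132 π := by
  constructor
  · rintro ⟨f, hm, hiff⟩
    refine ⟨Fin.cast (permWord_length π) (f (0 : Fin 3)),
      Fin.cast (permWord_length π) (f (1 : Fin 3)),
      Fin.cast (permWord_length π) (f (2 : Fin 3)), ?_, ?_, ?_, ?_⟩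
    · exact hm (show ((0 : Fin 3) : Fin ([1,3,2]:List ℕ).length) < (1 : Fin 3) by decide)
    · exact hm (show ((1 : Fin 3) : Fin ([1,3,2]:List ℕ).length) < (2 : Fin 3) by decide)
    · have := (hiff (0 : Fin 3) (2 : Fin 3)).mp (by decide)
      rw [permWord_get, permWord_get] at this
      exact (by omega : ((π (Fin.cast (permWord_length π) (f (0:Fin 3)))):ℕ) <
        (π (Fin.cast (permWord_length π) (f (2:Fin 3))) : ℕ))
    · have := (hiff (2 : Fin 3) (1 : Fin 3)).mp (by decide)
      rw [permWord_get, permWord_get] at this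
      exact (by omega : ((π (Fin.cast (permWord_length π) (f (2:Fin 3)))):ℕ) <
        (π (Fin.cast (permWord_length π) (f (1:Fin 3))) : ℕ))
  · rintro ⟨i, j, k, hij, hjk, h1, h2⟩
    have hij' : (i:ℕ) < j := hij
    have hjk' : (j:ℕ) < k := hjk
    have b1 : (π i : ℕ) < π k := h1
    have b2 : (π k : ℕ) < π j := h2
    refine ⟨fun a => Fin.cast (permWord_length π).symm (![i, j, k] a), ?_, ?_⟩
    · intro a b hab
      have hab' : (a:ℕ) < b := hab
      simp only [Fin.lt_def, Fin.coe_cast]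
      fin_cases a <;> fin_cases b <;> simp_all <;> omega
    · intro a b
      simp only [permWord_get, Fin.cast_cast, Fin.cast_eq_self]
      fin_cases a <;> fin_cases b <;> simp [List.get] <;> omega

noncomputable def ascSetF (π : Equiv.Perm (Fin n)) : Finset (Fin (n-1)) :=
  Finset.univ.filter fun t =>
    π ⟨t.1, by omega⟩ < π ⟨t.1 + 1, by omega⟩

lemma ascents_eq (π : Equiv.Perm (Fin n)) :
    ascents (permWord π) = (ascSetF π).card := by
  rw [ascents, ascSetF, permWord_length]
  apply Finset.card_bij (fun a ha => (⟨a, (Finset.mem_filter.1 ha).1 |> Finset.mem_range.1⟩ : Fin (n-1)))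
  · intro a ha
    have h1 := Finset.mem_range.1 (Finset.mem_filter.1 ha).1
    have h2 := (Finset.mem_filter.1 ha).2
    rw [permWord_getD π a (by omega), permWord_getD π (a+1) (by omega)] at h2
    simp only [Finset.mem_filter, Finset.mem_univ, true_and]
    exact (by omega : ((π ⟨a, by omega⟩ : ℕ)) < (π ⟨a+1, by omega⟩ : ℕ))
  · intro a ha b hb hab
    simpa using congrArg Fin.val hab
  · intro t ht
    refine ⟨t.1, Finset.mem_filter.2 ⟨Finset.mem_range.2 t.2, ?_⟩, by simp⟩
    rw [permWord_getD π t.1 (by omega), permWord_getD π (t.1+1) (by omega)]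
    have h2 := (Finset.mem_filter.1 ht).2
    have : ((π ⟨t.1, by omega⟩ : ℕ)) < (π ⟨t.1+1, by omega⟩ : ℕ) := h2
    omega

lemma asc_card_le (π : Equiv.Perm (Fin n)) : (ascSetF π).card ≤ n - 1 := by
  simpa [ascSetF] using Finset.card_le_card (Finset.filter_subset _ (Finset.univ : Finset (Fin (n-1))))

lemma descents_eq (π : Equiv.Perm (Fin n)) :
    descents (permWord π) = (n - 1) - (ascSetF π).card := by
  have key : descents (permWord π) + ascents (permWord π) = n - 1 := by
    rw [descents, ascents, permWord_length]
    have hcongr : (Finset.range (n-1)).filter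
        (fun i => (permWord π).getD i 0 < (permWord π).getD (i + 1) 0) =
        (Finset.range (n-1)).filter
        (fun i => ¬ (permWord π).getD (i+1) 0 < (permWord π).getD i 0) := by
      apply Finset.filter_congr
      intro i hi
      have hi' := Finset.mem_range.1 hi
      rw [permWord_getD π i (by omega), permWord_getD π (i+1) (by omega)]
      have hne : π ⟨i, by omega⟩ ≠ π ⟨i+1, by omega⟩ := by
        intro h
        have := π.injective h
        simp at this
      have : (π ⟨i, by omega⟩ : ℕ) ≠ (π ⟨i+1, by omega⟩ : ℕ) := by
        exact fun h => hne (Fin.val_injective h)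
      omega
    rw [hcongr, Finset.card_filter_add_card_filter_not]
    exact Finset.card_range _
  have := ascents_eq π
  have := asc_card_le π
  omega

section Generic
variable {n : ℕ} (R : ℕ → ℕ → Prop)
variable (hA1 : ∀ a b c : ℕ, a < b → b < c → R a b → R b c → R a c)
variable (hA2 : ∀ a b c : ℕ, a < b → b < c → ¬R a b → R a c → R b c)
variable (hA3 : ∀ a b c : ℕ, a < b → b < c → R a c → R a b)

noncomputable def Cset (i : Fin n) : Finset (Fin n) :=
  Finset.univ.filter fun j => (j < i ∧ R j i) ∨ (i < j ∧ ¬R i j)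

lemma Cset_not_mem (i : Fin n) : i ∉ Cset R i := by
  simp [Cset]

lemma Cset_card_lt (i : Fin n) : (Cset R i).card < n := by
  have h1 : Cset R i ⊆ Finset.univ.erase i := by
    intro x hx
    simp only [Cset, Finset.mem_filter] at hx
    rcases hx.2 with ⟨h, _⟩ | ⟨h, _⟩ <;>
      exact Finset.mem_erase.2 ⟨by intro he; subst he; exact lt_irrefl _ h, Finset.mem_univ x⟩
  calc (Cset R i).card ≤ (Finset.univ.erase i).card := Finset.card_le_card h1
    _ < Finset.univ.card := Finset.card_erase_lt_of_mem (Finset.mem_univ i)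
    _ = n := by simp

include hA1 hA2 hA3 in
lemma Cset_key {i j : Fin n} (hij : i < j) :
    (R i j → (Cset R i).card < (Cset R j).card) ∧
    (¬R i j → (Cset R j).card < (Cset R i).card) := by
  have hijn : (i:ℕ) < j := hij
  constructor
  · intro hR
    apply Finset.card_lt_card
    rw [Finset.ssubset_iff_of_subset]
    · exact ⟨i, by simp [Cset, hij, hR], Cset_not_mem R i⟩
    · intro q hq
      simp only [Cset, Finset.mem_filter, Finset.mem_univ, true_and] at hq ⊢
      rcases hq with ⟨h1, h2⟩ | ⟨h1, h2⟩
      · exact Or.inl ⟨h1.trans hij, hA1 _ _ _ h1 hijn h2 hR⟩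
      · -- i < q, ¬ R i q ; q must be > j
        rcases lt_trichotomy (q:ℕ) (j:ℕ) with hq | hq | hq
        · exact absurd (hA3 _ _ _ h1 hq hR) h2
        · exact (h2 (show R (i:ℕ) (q:ℕ) by rw [hq]; exact hR)).elim
        · exact Or.inr ⟨hq, fun hjq => h2 (hA1 _ _ _ hijn hq hR hjq)⟩
  · intro hR
    apply Finset.card_lt_card
    rw [Finset.ssubset_iff_of_subset]
    · refine ⟨j, by simp [Cset, hij, hR], Cset_not_mem R j⟩
    · intro q hq
      simp only [Cset, Finset.mem_filter, Finset.mem_univ, true_and] at hq ⊢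
      rcases hq with ⟨h1, h2⟩ | ⟨h1, h2⟩
      · -- q < j, R q j
        rcases lt_trichotomy (q:ℕ) (i:ℕ) with hq' | hq' | hq'
        · exact Or.inl ⟨hq', hA3 _ _ _ hq' hijn h2⟩
        · exact (hR (show R (i:ℕ) (j:ℕ) by rw [← hq']; exact h2)).elim
        · exact Or.inr ⟨hq', fun hiq => hR (hA1 _ _ _ hq' h1 hiq h2)⟩
      · exact Or.inr ⟨hij.trans h1, fun hiq => h2 (hA2 _ _ _ hijn h1 hR hiq)⟩

noncomputable def buildFun (i : Fin n) : Fin n := ⟨(Cset R i).card, Cset_card_lt R i⟩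

include hA1 hA2 hA3 in
lemma buildFun_injective : Function.Injective (buildFun (n := n) R) := by
  intro i j hij
  have hv : (Cset R i).card = (Cset R j).card := by
    simpa [buildFun, Fin.ext_iff] using hij
  by_contra hne
  rcases lt_trichotomy i j with h | h | h
  · by_cases hR : R i j
    · have := (Cset_key R hA1 hA2 hA3 h).1 hR; omega
    · have := (Cset_key R hA1 hA2 hA3 h).2 hR; omega
  · exact hne h
  · by_cases hR : R j i
    · have := (Cset_key R hA1 hA2 hA3 h).1 hR; omega
    · have := (Cset_key R hA1 hA2 hA3 h).2 hR; omega

noncomputable def buildPerm (hA1 : ∀ a b c : ℕ, a < b → b < c → R a b → R b c → R a c)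
    (hA2 : ∀ a b c : ℕ, a < b → b < c → ¬R a b → R a c → R b c)
    (hA3 : ∀ a b c : ℕ, a < b → b < c → R a c → R a b) : Equiv.Perm (Fin n) :=
  Equiv.ofBijective (buildFun R)
    ((Fintype.bijective_iff_injective_and_card _).2 ⟨buildFun_injective R hA1 hA2 hA3, rfl⟩)

include hA1 hA2 hA3 in
lemma buildPerm_lt_iff {i j : Fin n} (hij : i < j) :
    (buildPerm R hA1 hA2 hA3 i < buildPerm R hA1 hA2 hA3 j ↔ R i j) := by
  have happ : ∀ a : Fin n, buildPerm R hA1 hA2 hA3 a = buildFun R a := fun a => rfl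
  rw [happ, happ]
  constructor
  · intro hlt
    by_contra hR
    have := (Cset_key R hA1 hA2 hA3 hij).2 hR
    have hlt' : (Cset R i).card < (Cset R j).card := hlt
    omega
  · intro hR
    exact (Cset_key R hA1 hA2 hA3 hij).1 hR

end Generic

lemma perm_eq_of_lt_iff (π σ : Equiv.Perm (Fin n))
    (h : ∀ i j : Fin n, i < j → (π i < π j ↔ σ i < σ j)) : π = σ := by
  have key : StrictMono (fun x => σ (π.symm x)) := by
    intro a b hab
    set i := π.symm a with hi
    set j := π.symm b with hj
    have hpij : π i < π j := by simpa [hi, hj] using hab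
    have hne : i ≠ j := by
      intro he; rw [he] at hpij; exact lt_irrefl _ hpij
    rcases lt_trichotomy i j with hlt | he | hgt
    · exact (h i j hlt).1 hpij
    · exact absurd he hne
    · have : ¬ π j < π i := fun hc => lt_asymm hpij hc
      have : ¬ σ j < σ i := fun hc => this ((h j i hgt).2 hc)
      rcases lt_trichotomy (σ i) (σ j) with h1 | h1 | h1
      · exact h1
      · exact absurd (σ.injective h1) hne
      · exact absurd h1 this
  let E : Fin n ≃o Fin n := StrictMono.orderIsoOfSurjective _ key
    (fun y => ⟨π (σ.symm y), by simp⟩)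
  ext x
  have h2 : ((E (π x) : Fin n) : ℕ) = ((π x : Fin n) : ℕ) := Fin.coe_orderIso_apply E (π x)
  have h3 : E (π x) = σ x := by
    show σ (π.symm (π x)) = σ x
    simp
  rw [h3] at h2
  exact h2.symm

def Pat213 (π : Equiv.Perm (Fin n)) : Prop :=
  ∃ i j k : Fin n, i < j ∧ j < k ∧ π j < π i ∧ π i < π k
def Pat231 (π : Equiv.Perm (Fin n)) : Prop :=
  ∃ i j k : Fin n, i < j ∧ j < k ∧ π k < π i ∧ π i < π j

def ascP (π : Equiv.Perm (Fin n)) (t : ℕ) : Prop :=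
  ∃ h : t + 1 < n, π ⟨t, by omega⟩ < π ⟨t + 1, h⟩

def R1 (A : ℕ → Prop) (a b : ℕ) : Prop := ∀ t, a ≤ t → t < b → A t
def R2 (A : ℕ → Prop) (a b : ℕ) : Prop := A a

lemma run_mono (π : Equiv.Perm (Fin n)) :
    ∀ d (i j : Fin n), (j:ℕ) = (i:ℕ) + d + 1 →
      (∀ t : ℕ, (i:ℕ) ≤ t → t < (j:ℕ) → ascP π t) → π i < π j := by
  intro d
  induction d with
  | zero =>
    intro i j hj h
    obtain ⟨hlt, hasc⟩ := h i le_rfl (by omega)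
    have hj' : (⟨(i:ℕ) + 1, hlt⟩ : Fin n) = j := Fin.ext (by simp; omega)
    rw [← hj']
    exact hasc
  | succ d ih =>
    intro i j hj h
    have hi1 : (i:ℕ) + 1 < n := by have := j.isLt; omega
    set i' : Fin n := ⟨(i:ℕ) + 1, hi1⟩ with hi'
    obtain ⟨hlt, hasc⟩ := h i le_rfl (by omega)
    have h1 : π i < π i' := hasc
    have h2 : π i' < π j := ih i' j (by simp [hi']; omega)
      (fun t ht1 ht2 => h t (by simp [hi'] at ht1; omega) ht2)
    exact h1.trans h2

lemma oc1_mp (π : Equiv.Perm (Fin n)) (hav : ¬Pat132 π ∧ ¬Pat213 π) :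
    ∀ d (i j : Fin n), (j:ℕ) = (i:ℕ) + d + 1 → π i < π j →
      ∀ t : ℕ, (i:ℕ) ≤ t → t < (j:ℕ) → ascP π t := by
  intro d
  induction d with
  | zero =>
    intro i j hj hlt t ht1 ht2
    have ht : t = (i:ℕ) := by omega
    refine ⟨by omega, ?_⟩
    have e1 : (⟨t, by omega⟩ : Fin n) = i := Fin.ext (by simp; omega)
    have e2 : (⟨t + 1, by omega⟩ : Fin n) = j := Fin.ext (by simp; omega)
    rw [e1, e2]
    exact hlt
  | succ d ih =>
    intro i j hj hlt t ht1 ht2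
    have hi1 : (i:ℕ) + 1 < n := by have := j.isLt; omega
    set i' : Fin n := ⟨(i:ℕ) + 1, hi1⟩ with hi'
    have hii' : i < i' := by simp [Fin.lt_def, hi']
    have hi'j : i' < j := by simp [Fin.lt_def, hi']; omega
    have hne1 : π i' ≠ π i := fun h => by
      have := π.injective h
      rw [this] at hii'; exact lt_irrefl _ hii'
    have hlt1 : π i < π i' := by
      rcases lt_trichotomy (π i') (π i) with h' | h' | h'
      · exact absurd ⟨i, i', j, hii', hi'j, h', hlt⟩ hav.2
      · exact absurd h' hne1
      · exact h'
    have hlt2 : π i' < π j := by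
      rcases lt_trichotomy (π j) (π i') with h' | h' | h'
      · exact absurd ⟨i, i', j, hii', hi'j, hlt, h'⟩ hav.1
      · have := π.injective h'
        rw [this] at hi'j; exact absurd hi'j (lt_irrefl _)
      · exact h'
    rcases Nat.eq_or_lt_of_le ht1 with he | hgt
    · subst he
      exact ⟨by omega, by
        have hj' : (⟨(i:ℕ) + 1, by omega⟩ : Fin n) = i' := rfl
        rw [hj']; exact hlt1⟩
    · exact ih i' j (by simp [hi']; omega) hlt2 t (by simp [hi']; omega) ht2

theorem oc1 (π : Equiv.Perm (Fin n)) (hav : ¬Pat132 π ∧ ¬Pat213 π) :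
    ∀ i j : Fin n, i < j → (π i < π j ↔ R1 (ascP π) (i:ℕ) (j:ℕ)) := by
  intro i j hij
  have hij' : (i:ℕ) < (j:ℕ) := hij
  constructor
  · intro hlt
    exact oc1_mp π hav ((j:ℕ) - (i:ℕ) - 1) i j (by omega) hlt
  · intro hR
    exact run_mono π ((j:ℕ) - (i:ℕ) - 1) i j (by omega) hR

theorem oc2 (π : Equiv.Perm (Fin n)) (hav : ¬Pat213 π ∧ ¬Pat231 π) :
    ∀ i j : Fin n, i < j → (π i < π j ↔ R2 (ascP π) (i:ℕ) (j:ℕ)) := by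
  intro i j hij
  have hij' : (i:ℕ) < (j:ℕ) := hij
  have hi1 : (i:ℕ) + 1 < n := by have := j.isLt; omega
  set i' : Fin n := ⟨(i:ℕ) + 1, hi1⟩ with hi'
  have hii' : i < i' := by simp [Fin.lt_def, hi']
  have hne1 : π i' ≠ π i := fun h => by
    have := π.injective h
    rw [this] at hii'; exact lt_irrefl _ hii'
  constructor
  · intro hlt
    refine ⟨hi1, ?_⟩
    show π i < π i'
    rcases lt_trichotomy (π i') (π i) with h' | h' | h'
    · rcases Nat.eq_or_lt_of_le (show (i:ℕ)+1 ≤ (j:ℕ) by omega) with he | hgt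
      · have : i' = j := Fin.ext (by simp [hi']; omega)
        rw [this] at h'
        exact absurd hlt (lt_asymm h')
      · have hi'j : i' < j := by simp [Fin.lt_def, hi']; omega
        exact absurd ⟨i, i', j, hii', hi'j, h', hlt⟩ hav.1
    · exact absurd h' hne1
    · exact h'
  · rintro ⟨h, hasc⟩
    have hasc' : π i < π i' := hasc
    rcases Nat.eq_or_lt_of_le (show (i:ℕ)+1 ≤ (j:ℕ) by omega) with he | hgt
    · have : i' = j := Fin.ext (by simp [hi']; omega)
      rw [← this]; exact hasc'
    · have hi'j : i' < j := by simp [Fin.lt_def, hi']; omega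
      rcases lt_trichotomy (π j) (π i) with h' | h' | h'
      · exact absurd ⟨i, i', j, hii', hi'j, h', hasc'⟩ hav.2
      · have := π.injective h'
        rw [this] at hij; exact absurd hij (lt_irrefl _)
      · exact h'

lemma av1_of_oc (π : Equiv.Perm (Fin n)) (A : ℕ → Prop)
    (h : ∀ i j : Fin n, i < j → (π i < π j ↔ R1 A (i:ℕ) (j:ℕ))) :
    ¬Pat132 π ∧ ¬Pat213 π := by
  constructor
  · rintro ⟨i, j, k, hij, hjk, h1, h2⟩
    have hik := hij.trans hjk
    have hRik := (h i k hik).1 h1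
    have hnot : ¬ R1 A (j:ℕ) (k:ℕ) := fun hr => lt_asymm h2 ((h j k hjk).2 hr)
    have hij' : (i:ℕ) < (j:ℕ) := hij
    exact hnot (fun t ht1 ht2 => hRik t (by omega) ht2)
  · rintro ⟨i, j, k, hij, hjk, h1, h2⟩
    have hik := hij.trans hjk
    have hRik := (h i k hik).1 h2
    have hnot : ¬ R1 A (i:ℕ) (j:ℕ) := fun hr => lt_asymm h1 ((h i j hij).2 hr)
    have hjk' : (j:ℕ) < (k:ℕ) := hjk
    exact hnot (fun t ht1 ht2 => hRik t ht1 (by omega))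

lemma av2_of_oc (π : Equiv.Perm (Fin n)) (A : ℕ → Prop)
    (h : ∀ i j : Fin n, i < j → (π i < π j ↔ R2 A (i:ℕ) (j:ℕ))) :
    ¬Pat213 π ∧ ¬Pat231 π := by
  constructor
  · rintro ⟨i, j, k, hij, hjk, h1, h2⟩
    exact lt_asymm h1 ((h i j hij).2 ((h i k (hij.trans hjk)).1 h2))
  · rintro ⟨i, j, k, hij, hjk, h1, h2⟩
    exact lt_asymm h1 ((h i k (hij.trans hjk)).2 ((h i j hij).1 h2))



section Count
variable {n : ℕ} (Rb : (ℕ → Prop) → ℕ → ℕ → Prop)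
variable (Av : Equiv.Perm (Fin n) → Prop)
variable (hax1 : ∀ (A : ℕ → Prop) (a b c : ℕ), a < b → b < c → Rb A a b → Rb A b c → Rb A a c)
variable (hax2 : ∀ (A : ℕ → Prop) (a b c : ℕ), a < b → b < c → ¬Rb A a b → Rb A a c → Rb A b c)
variable (hax3 : ∀ (A : ℕ → Prop) (a b c : ℕ), a < b → b < c → Rb A a c → Rb A a b)
variable (hmono : ∀ A A' : ℕ → Prop, (∀ t, A t ↔ A' t) → ∀ a b, Rb A a b ↔ Rb A' a b)
variable (hstep : ∀ (A : ℕ → Prop) (t : ℕ), Rb A t (t+1) ↔ A t)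
variable (hoc : ∀ π : Equiv.Perm (Fin n), Av π →
  ∀ i j : Fin n, i < j → (π i < π j ↔ Rb (ascP π) (i:ℕ) (j:ℕ)))
variable (hav : ∀ (π : Equiv.Perm (Fin n)) (A : ℕ → Prop),
  (∀ i j : Fin n, i < j → (π i < π j ↔ Rb A (i:ℕ) (j:ℕ))) → Av π)

def AS (S : Finset (Fin (n-1))) : ℕ → Prop :=
  fun t => ∃ h : t < n - 1, (⟨t, h⟩ : Fin (n-1)) ∈ S

noncomputable def eS (S : Finset (Fin (n-1))) : Equiv.Perm (Fin n) :=
  buildPerm (Rb (AS S)) (hax1 _) (hax2 _) (hax3 _)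

lemma eS_oc (S : Finset (Fin (n-1))) :
    ∀ i j : Fin n, i < j → (eS Rb hax1 hax2 hax3 S i < eS Rb hax1 hax2 hax3 S j
      ↔ Rb (AS S) (i:ℕ) (j:ℕ)) :=
  fun _ _ hij => buildPerm_lt_iff (Rb (AS S)) (hax1 _) (hax2 _) (hax3 _) hij

include hstep in
lemma ascP_iff_of_oc (π : Equiv.Perm (Fin n)) (A : ℕ → Prop)
    (h : ∀ i j : Fin n, i < j → (π i < π j ↔ Rb A (i:ℕ) (j:ℕ))) (t : ℕ) :
    ascP π t ↔ (t + 1 < n ∧ A t) := by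
  constructor
  · rintro ⟨hb, hlt⟩
    exact ⟨hb, (hstep A t).1 ((h ⟨t, by omega⟩ ⟨t+1, hb⟩ (by simp [Fin.lt_def])).1 hlt)⟩
  · rintro ⟨hb, hA⟩
    exact ⟨hb, (h ⟨t, by omega⟩ ⟨t+1, hb⟩ (by simp [Fin.lt_def])).2 ((hstep A t).2 hA)⟩

lemma ascP_iff_AS (π : Equiv.Perm (Fin n)) (t : ℕ) :
    ascP π t ↔ AS (ascSetF π) t := by
  constructor
  · rintro ⟨h, hlt⟩
    refine ⟨by omega, ?_⟩
    simp only [ascSetF, Finset.mem_filter, Finset.mem_univ, true_and]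
    exact hlt
  · rintro ⟨h, hmem⟩
    simp only [ascSetF, Finset.mem_filter, Finset.mem_univ, true_and] at hmem
    exact ⟨by omega, hmem⟩

include hstep in
lemma ascSetF_eS (S : Finset (Fin (n-1))) :
    ascSetF (eS Rb hax1 hax2 hax3 S) = S := by
  ext t
  simp only [ascSetF, Finset.mem_filter, Finset.mem_univ, true_and]
  have hlt : (⟨(t:ℕ), by omega⟩ : Fin n) < ⟨(t:ℕ)+1, by omega⟩ := by simp [Fin.lt_def]
  rw [eS_oc Rb hax1 hax2 hax3 S _ _ hlt]
  show Rb (AS S) (t:ℕ) ((t:ℕ)+1) ↔ t ∈ S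
  rw [hstep]
  constructor
  · rintro ⟨h, hm⟩
    exact hm
  · intro hm
    exact ⟨t.2, hm⟩

include hax1 hax2 hax3 hmono hstep hoc hav in
lemma count_ascSet (m : ℕ) :
    (Finset.univ.filter fun π : Equiv.Perm (Fin n) =>
      Av π ∧ (ascSetF π).card = m).card = (n-1).choose m := by
  have hsub : (Finset.univ.filter fun S : Finset (Fin (n-1)) => S.card = m).card
      = (n-1).choose m := by
    have he : (Finset.univ.filter fun S : Finset (Fin (n-1)) => S.card = m)
        = Finset.powersetCard m Finset.univ := by
      ext S
      simp [Finset.mem_powersetCard]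
    rw [he, Finset.card_powersetCard]
    simp
  rw [← hsub]
  apply Finset.card_bij' (i := fun π _ => ascSetF π)
    (j := fun S _ => eS Rb hax1 hax2 hax3 S)
  · intro π hπ
    simp only [Finset.mem_filter, Finset.mem_univ, true_and] at hπ ⊢
    exact hπ.2
  · intro S hS
    simp only [Finset.mem_filter, Finset.mem_univ, true_and] at hS ⊢
    constructor
    · exact hav _ (AS S) (eS_oc Rb hax1 hax2 hax3 S)
    · rw [ascSetF_eS Rb hax1 hax2 hax3 hstep S]
      exact hS
  · intro π hπ
    simp only [Finset.mem_filter, Finset.mem_univ, true_and] at hπ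
    apply perm_eq_of_lt_iff
    intro i j hij
    rw [eS_oc Rb hax1 hax2 hax3 _ _ _ hij,
      hmono (AS (ascSetF π)) (ascP π) (fun t => (ascP_iff_AS π t).symm),
      ← hoc π hπ.1 i j hij]
  · intro S _
    exact ascSetF_eS Rb hax1 hax2 hax3 hstep S

end Count

section Classes
variable {n : ℕ}

lemma r1ax1 : ∀ (A : ℕ → Prop) (a b c : ℕ), a < b → b < c → R1 A a b → R1 A b c → R1 A a c :=
  fun A a b c hab hbc h1 h2 t ht1 ht2 => by
    rcases lt_or_ge t b with h | h
    · exact h1 t ht1 h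
    · exact h2 t h ht2

lemma r1ax2 : ∀ (A : ℕ → Prop) (a b c : ℕ), a < b → b < c → ¬R1 A a b → R1 A a c → R1 A b c :=
  fun A a b c hab hbc _ h t ht1 ht2 => h t (by omega) ht2

lemma r1ax3 : ∀ (A : ℕ → Prop) (a b c : ℕ), a < b → b < c → R1 A a c → R1 A a b :=
  fun A a b c hab hbc h t ht1 ht2 => h t ht1 (by omega)

lemma r1mono : ∀ A A' : ℕ → Prop, (∀ t, A t ↔ A' t) → ∀ a b, R1 A a b ↔ R1 A' a b :=
  fun A A' hAA a b =>
    ⟨fun h t ht1 ht2 => (hAA t).1 (h t ht1 ht2), fun h t ht1 ht2 => (hAA t).2 (h t ht1 ht2)⟩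

lemma r1step : ∀ (A : ℕ → Prop) (t : ℕ), R1 A t (t+1) ↔ A t := by
  intro A t
  constructor
  · intro h
    exact h t le_rfl (by omega)
  · intro h s hs1 hs2
    have he : s = t := by omega
    rw [he]
    exact h

lemma r2ax1 : ∀ (A : ℕ → Prop) (a b c : ℕ), a < b → b < c → R2 A a b → R2 A b c → R2 A a c :=
  fun A a b c _ _ h1 _ => h1

lemma r2ax2 : ∀ (A : ℕ → Prop) (a b c : ℕ), a < b → b < c → ¬R2 A a b → R2 A a c → R2 A b c :=
  fun A a b c _ _ h1 h2 => (h1 h2).elim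

lemma r2ax3 : ∀ (A : ℕ → Prop) (a b c : ℕ), a < b → b < c → R2 A a c → R2 A a b :=
  fun A a b c _ _ h => h

lemma r2mono : ∀ A A' : ℕ → Prop, (∀ t, A t ↔ A' t) → ∀ a b, R2 A a b ↔ R2 A' a b :=
  fun A A' hAA a b => hAA a

lemma r2step : ∀ (A : ℕ → Prop) (t : ℕ), R2 A t (t+1) ↔ A t := fun A t => Iff.rfl

end Classes


section Final
variable {n : ℕ}

lemma contains213_iff (π : Equiv.Perm (Fin n)) :
    ContainsPat (permWord π) [2,1,3] ↔ Pat213 π := by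
  constructor
  · rintro ⟨f, hm, hiff⟩
    refine ⟨Fin.cast (permWord_length π) (f (0 : Fin 3)),
      Fin.cast (permWord_length π) (f (1 : Fin 3)),
      Fin.cast (permWord_length π) (f (2 : Fin 3)), ?_, ?_, ?_, ?_⟩
    · exact hm (show ((0 : Fin 3) : Fin ([2,1,3]:List ℕ).length) < (1 : Fin 3) by decide)
    · exact hm (show ((1 : Fin 3) : Fin ([2,1,3]:List ℕ).length) < (2 : Fin 3) by decide)
    · have := (hiff (1 : Fin 3) (0 : Fin 3)).mp (by decide)
      rw [permWord_get, permWord_get] at this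
      exact (by omega : ((π (Fin.cast (permWord_length π) (f (1:Fin 3)))):ℕ) <
        (π (Fin.cast (permWord_length π) (f (0:Fin 3))) : ℕ))
    · have := (hiff (0 : Fin 3) (2 : Fin 3)).mp (by decide)
      rw [permWord_get, permWord_get] at this
      exact (by omega : ((π (Fin.cast (permWord_length π) (f (0:Fin 3)))):ℕ) <
        (π (Fin.cast (permWord_length π) (f (2:Fin 3))) : ℕ))
  · rintro ⟨i, j, k, hij, hjk, h1, h2⟩
    have hij' : (i:ℕ) < j := hij
    have hjk' : (j:ℕ) < k := hjk
    have b1 : (π j : ℕ) < π i := h1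
    have b2 : (π i : ℕ) < π k := h2
    refine ⟨fun a => Fin.cast (permWord_length π).symm (![i, j, k] a), ?_, ?_⟩
    · intro a b hab
      have hab' : (a:ℕ) < b := hab
      simp only [Fin.lt_def, Fin.coe_cast]
      fin_cases a <;> fin_cases b <;> simp_all <;> omega
    · intro a b
      simp only [permWord_get, Fin.cast_cast, Fin.cast_eq_self]
      fin_cases a <;> fin_cases b <;>
        simp [List.get] <;> omega

lemma contains231_iff (π : Equiv.Perm (Fin n)) :
    ContainsPat (permWord π) [2,3,1] ↔ Pat231 π := by
  constructor
  · rintro ⟨f, hm, hiff⟩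
    refine ⟨Fin.cast (permWord_length π) (f (0 : Fin 3)),
      Fin.cast (permWord_length π) (f (1 : Fin 3)),
      Fin.cast (permWord_length π) (f (2 : Fin 3)), ?_, ?_, ?_, ?_⟩
    · exact hm (show ((0 : Fin 3) : Fin ([2,3,1]:List ℕ).length) < (1 : Fin 3) by decide)
    · exact hm (show ((1 : Fin 3) : Fin ([2,3,1]:List ℕ).length) < (2 : Fin 3) by decide)
    · have := (hiff (2 : Fin 3) (0 : Fin 3)).mp (by decide)
      rw [permWord_get, permWord_get] at this
      exact (by omega : ((π (Fin.cast (permWord_length π) (f (2:Fin 3)))):ℕ) <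
        (π (Fin.cast (permWord_length π) (f (0:Fin 3))) : ℕ))
    · have := (hiff (0 : Fin 3) (1 : Fin 3)).mp (by decide)
      rw [permWord_get, permWord_get] at this
      exact (by omega : ((π (Fin.cast (permWord_length π) (f (0:Fin 3)))):ℕ) <
        (π (Fin.cast (permWord_length π) (f (1:Fin 3))) : ℕ))
  · rintro ⟨i, j, k, hij, hjk, h1, h2⟩
    have hij' : (i:ℕ) < j := hij
    have hjk' : (j:ℕ) < k := hjk
    have b1 : (π k : ℕ) < π i := h1
    have b2 : (π i : ℕ) < π j := h2
    refine ⟨fun a => Fin.cast (permWord_length π).symm (![i, j, k] a), ?_, ?_⟩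
    · intro a b hab
      have hab' : (a:ℕ) < b := hab
      simp only [Fin.lt_def, Fin.coe_cast]
      fin_cases a <;> fin_cases b <;> simp_all <;> omega
    · intro a b
      simp only [permWord_get, Fin.cast_cast, Fin.cast_eq_self]
      fin_cases a <;> fin_cases b <;>
        simp [List.get] <;> omega

lemma avoidsAll1_iff (π : Equiv.Perm (Fin n)) :
    AvoidsAll (permWord π) [[1,3,2],[2,1,3]] ↔ (¬Pat132 π ∧ ¬Pat213 π) := by
  constructor
  · intro h
    exact ⟨fun hp => h [1,3,2] (by simp) ((contains132_iff π).2 hp),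
      fun hp => h [2,1,3] (by simp) ((contains213_iff π).2 hp)⟩
  · rintro ⟨h1, h2⟩ ρ hρ
    simp only [List.mem_cons, List.not_mem_nil, or_false, List.mem_singleton] at hρ
    rcases hρ with rfl | rfl
    · exact fun hc => h1 ((contains132_iff π).1 hc)
    · exact fun hc => h2 ((contains213_iff π).1 hc)

lemma avoidsAll2_iff (π : Equiv.Perm (Fin n)) :
    AvoidsAll (permWord π) [[2,1,3],[2,3,1]] ↔ (¬Pat213 π ∧ ¬Pat231 π) := by
  constructor
  · intro h
    exact ⟨fun hp => h [2,1,3] (by simp) ((contains213_iff π).2 hp),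
      fun hp => h [2,3,1] (by simp) ((contains231_iff π).2 hp)⟩
  · rintro ⟨h1, h2⟩ ρ hρ
    simp only [List.mem_cons, List.not_mem_nil, or_false, List.mem_singleton] at hρ
    rcases hρ with rfl | rfl
    · exact fun hc => h1 ((contains213_iff π).1 hc)
    · exact fun hc => h2 ((contains231_iff π).1 hc)

lemma base1 (m : ℕ) :
    (Finset.univ.filter fun π : Equiv.Perm (Fin n) =>
      (¬Pat132 π ∧ ¬Pat213 π) ∧ (ascSetF π).card = m).card = (n-1).choose m := by
  have h := count_ascSet (n := n) R1 (fun π => ¬Pat132 π ∧ ¬Pat213 π) r1ax1 r1ax2 r1ax3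
    r1mono r1step (fun π h => oc1 π h) (fun π A h => av1_of_oc π A h) m
  rw [← h]
  congr 1
  ext π
  simp [Finset.mem_filter]

lemma base2 (m : ℕ) :
    (Finset.univ.filter fun π : Equiv.Perm (Fin n) =>
      (¬Pat213 π ∧ ¬Pat231 π) ∧ (ascSetF π).card = m).card = (n-1).choose m := by
  have h := count_ascSet (n := n) R2 (fun π => ¬Pat213 π ∧ ¬Pat231 π) r2ax1 r2ax2 r2ax3
    r2mono r2step (fun π h => oc2 π h) (fun π A h => av2_of_oc π A h) m
  rw [← h]
  congr 1
  ext π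
  simp [Finset.mem_filter]

end Final

end Stmt9Aux


theorem stmt9 (n k : ℕ) (hn : 1 ≤ n) :
    acount n k ascents [[1,3,2],[2,1,3]] = Nat.choose (n - 1) k ∧
    acount n k descents [[1,3,2],[2,1,3]] = Nat.choose (n - 1) k ∧
    acount n k ascents [[2,1,3],[2,3,1]] = Nat.choose (n - 1) k ∧
    acount n k descents [[2,1,3],[2,3,1]] = Nat.choose (n - 1) k := by
  refine ⟨?_, ?_, ?_, ?_⟩
  · rw [acount]
    have he : (Finset.univ.filter fun π : Equiv.Perm (Fin n) =>
        AvoidsAll (permWord π) [[1,3,2],[2,1,3]] ∧ ascents (permWord π) = k)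
        = (Finset.univ.filter fun π : Equiv.Perm (Fin n) =>
        (¬Stmt9Aux.Pat132 π ∧ ¬Stmt9Aux.Pat213 π) ∧ (Stmt9Aux.ascSetF π).card = k) := by
      ext π
      simp only [Finset.mem_filter, Finset.mem_univ, true_and]
      rw [Stmt9Aux.avoidsAll1_iff, Stmt9Aux.ascents_eq]
    rw [he]
    exact Stmt9Aux.base1 k
  · rw [acount]
    rcases le_or_gt k (n-1) with hk | hk
    · have he : (Finset.univ.filter fun π : Equiv.Perm (Fin n) =>
          AvoidsAll (permWord π) [[1,3,2],[2,1,3]] ∧ descents (permWord π) = k)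
          = (Finset.univ.filter fun π : Equiv.Perm (Fin n) =>
          (¬Stmt9Aux.Pat132 π ∧ ¬Stmt9Aux.Pat213 π) ∧ (Stmt9Aux.ascSetF π).card = n-1-k) := by
        ext π
        simp only [Finset.mem_filter, Finset.mem_univ, true_and]
        rw [Stmt9Aux.avoidsAll1_iff, Stmt9Aux.descents_eq]
        have hle := Stmt9Aux.asc_card_le π
        constructor
        · rintro ⟨h1, h2⟩; exact ⟨h1, by omega⟩
        · rintro ⟨h1, h2⟩; exact ⟨h1, by omega⟩
      rw [he, Stmt9Aux.base1 (n-1-k), Nat.choose_symm hk]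
    · have he : (Finset.univ.filter fun π : Equiv.Perm (Fin n) =>
          AvoidsAll (permWord π) [[1,3,2],[2,1,3]] ∧ descents (permWord π) = k) = ∅ := by
        apply Finset.filter_eq_empty_iff.2
        intro π _
        rintro ⟨-, h2⟩
        rw [Stmt9Aux.descents_eq] at h2
        have := Stmt9Aux.asc_card_le (n := n) π
        omega
      rw [he]
      rw [Nat.choose_eq_zero_of_lt (by omega : n-1 < k)]
      simp
  · rw [acount]
    have he : (Finset.univ.filter fun π : Equiv.Perm (Fin n) =>
        AvoidsAll (permWord π) [[2,1,3],[2,3,1]] ∧ ascents (permWord π) = k)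
        = (Finset.univ.filter fun π : Equiv.Perm (Fin n) =>
        (¬Stmt9Aux.Pat213 π ∧ ¬Stmt9Aux.Pat231 π) ∧ (Stmt9Aux.ascSetF π).card = k) := by
      ext π
      simp only [Finset.mem_filter, Finset.mem_univ, true_and]
      rw [Stmt9Aux.avoidsAll2_iff, Stmt9Aux.ascents_eq]
    rw [he]
    exact Stmt9Aux.base2 k
  · rw [acount]
    rcases le_or_gt k (n-1) with hk | hk
    · have he : (Finset.univ.filter fun π : Equiv.Perm (Fin n) =>
          AvoidsAll (permWord π) [[2,1,3],[2,3,1]] ∧ descents (permWord π) = k)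
          = (Finset.univ.filter fun π : Equiv.Perm (Fin n) =>
          (¬Stmt9Aux.Pat213 π ∧ ¬Stmt9Aux.Pat231 π) ∧ (Stmt9Aux.ascSetF π).card = n-1-k) := by
        ext π
        simp only [Finset.mem_filter, Finset.mem_univ, true_and]
        rw [Stmt9Aux.avoidsAll2_iff, Stmt9Aux.descents_eq]
        have hle := Stmt9Aux.asc_card_le π
        constructor
        · rintro ⟨h1, h2⟩; exact ⟨h1, by omega⟩
        · rintro ⟨h1, h2⟩; exact ⟨h1, by omega⟩
      rw [he, Stmt9Aux.base2 (n-1-k), Nat.choose_symm hk]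
    · have he : (Finset.univ.filter fun π : Equiv.Perm (Fin n) =>
          AvoidsAll (permWord π) [[2,1,3],[2,3,1]] ∧ descents (permWord π) = k) = ∅ := by
        apply Finset.filter_eq_empty_iff.2
        intro π _
        rintro ⟨-, h2⟩
        rw [Stmt9Aux.descents_eq] at h2
        have := Stmt9Aux.asc_card_le (n := n) π
        omega
      rw [he]
      rw [Nat.choose_eq_zero_of_lt (by omega : n-1 < k)]
      simp
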